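/- Let A be an in-weighting on a digraph G = (V,E) with (ν_j, ν_i) ∈ E, and let Ā be an in-weighting on Ḡ = (V, E∖{(ν_j, ν_i)}) with ā_{ij} = 0 and ā_{qr} = a_{qr} for all q ≠ i and all r. Then for every vertex ν_p, all q ∈ {1,…,n}, and every m ∈ ℕ with 1 ≤ m ≤ dist(G; ν_j, ν_p), the perturbation of the m-th matrix power is concentrated on walks whose first edge enters ν_i: [Ā^m]_{pq} − [A^m]_{pq} = Φ(Ω^m(Ḡ; ν_q, ν_i, ν_p), Ā) − Φ(Ω^m(G; ν_q, ν_i, ν_p), A), where Ω^m(G; ν_q, ν_i, ν_p) denotes the set of length-m walks from ν_q to ν_p whose first edge is (ν_q, ν_i). -/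

import Mathlib

open Finset

/-- The finite set of walks of length `k` from `q` to `p` in the digraph on `Fin n`
with edge set `E`, encoded as vertex sequences `f : Fin (k+1) → Fin n`. -/
def walks (n : ℕ) (E : Finset (Fin n × Fin n)) (k : ℕ) (q p : Fin n) :
    Finset (Fin (k + 1) → Fin n) :=
  Finset.univ.filter fun f : Fin (k + 1) → Fin n =>
    (∀ i : Fin k, (f i.castSucc, f i.succ) ∈ E) ∧ f 0 = q ∧ f (Fin.last k) = p

/-- Walks of length `k` from `q` to `p` whose first edge is `(q, r)`. -/
def walksThrough (n : ℕ) (E : Finset (Fin n × Fin n)) (k : ℕ) (q r p : Fin n) :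
    Finset (Fin (k + 1) → Fin n) :=
  (walks n E k q p).filter fun f => f 1 = r

/-- Weight of a walk w.r.t. an in-weighting `A`: each edge `(u, v)` contributes `A v u`. -/
def walkWeight {n k : ℕ} (A : Matrix (Fin n) (Fin n) ℝ) (f : Fin (k + 1) → Fin n) : ℝ :=
  ∏ i : Fin k, A (f i.succ) (f i.castSucc)

/-- `Φ(Ω, A)`: sum of the weights of the walks in `Ω` w.r.t. `A`. -/
def phi {n k : ℕ} (A : Matrix (Fin n) (Fin n) ℝ) (Ω : Finset (Fin (k + 1) → Fin n)) : ℝ :=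
  ∑ f ∈ Ω, walkWeight A f

/-- Distance from `q` to `p` in the digraph: the least length of a walk, `⊤` if none. -/
noncomputable def gdist (n : ℕ) (E : Finset (Fin n × Fin n)) (q p : Fin n) : ℕ∞ :=
  ⨅ m ∈ {m : ℕ | (walks n E m q p).Nonempty}, (m : ℕ∞)

/-- Diameter of the digraph. -/
noncomputable def gdiam (n : ℕ) (E : Finset (Fin n × Fin n)) : ℕ∞ :=
  ⨆ q : Fin n, ⨆ p : Fin n, gdist n E q p

/-- `A` is an in-weighting on the digraph with edge set `E`. -/
def IsInWeighting {n : ℕ} (E : Finset (Fin n × Fin n))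
    (A : Matrix (Fin n) (Fin n) ℝ) : Prop :=
  ∀ p q : Fin n, (q, p) ∉ E → A p q = 0

/-- `Δ_{t_f}(p, k)`: jump of the `k`-th one-sided derivatives of `x_p` at `t_f`. -/
noncomputable def jump {n : ℕ} (x : ℝ → Fin n → ℝ) (tf : ℝ) (p : Fin n) (k : ℕ) : ℝ :=
  iteratedDerivWithin k (fun t => x t p) (Set.Ici tf) tf
    - iteratedDerivWithin k (fun t => x t p) (Set.Iic tf) tf

lemma pow_apply_eq_sum_weight {n : ℕ} (B : Matrix (Fin n) (Fin n) ℝ) (m : ℕ) (q p : Fin n) :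
    (B ^ m) p q = ∑ f : Fin (m + 1) → Fin n,
      if f 0 = q ∧ f (Fin.last m) = p then walkWeight B f else 0 := by
  induction m generalizing q with
  | zero =>
    have e1 : ∀ f : Fin 1 → Fin n,
        (if f 0 = q ∧ f (Fin.last 0) = p then walkWeight B f else 0)
          = if f 0 = q ∧ f 0 = p then (1 : ℝ) else 0 := by
      intro f
      have : Fin.last 0 = 0 := rfl
      simp [walkWeight, this]
    rw [Finset.sum_congr rfl fun f _ => e1 f,
      show (∑ f : Fin 1 → Fin n, if f 0 = q ∧ f 0 = p then (1 : ℝ) else 0)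
          = ∑ r : Fin n, if r = q ∧ r = p then (1 : ℝ) else 0 from
        Fintype.sum_equiv (Equiv.funUnique (Fin 1) (Fin n)) _ _ (fun x => rfl)]
    rcases eq_or_ne q p with h | h
    · subst h
      simp [Matrix.one_apply, Finset.sum_ite_eq']
    · rw [Finset.sum_eq_zero fun r _ => if_neg (by rintro ⟨rfl, rfl⟩; exact h rfl)]
      simp [Matrix.one_apply, Ne.symm h]
  | succ m ih =>
    rw [pow_succ, Matrix.mul_apply]
    have key : ∀ r : Fin n, ∀ g : Fin (m + 1) → Fin n,
        walkWeight B (Fin.cons r g) = B (g 0) r * walkWeight B g := by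
      intro r g
      rw [walkWeight, Fin.prod_univ_succ]
      simp [walkWeight, ← Fin.succ_castSucc]
    calc ∑ r, (B ^ m) p r * B r q
        = ∑ r, ∑ g : Fin (m + 1) → Fin n,
            if g 0 = r ∧ g (Fin.last m) = p then B r q * walkWeight B g else 0 := by
          refine Finset.sum_congr rfl fun r _ => ?_
          rw [ih, Finset.sum_mul]
          refine Finset.sum_congr rfl fun g _ => ?_
          split <;> ring
      _ = ∑ g : Fin (m + 1) → Fin n,
            if g (Fin.last m) = p then B (g 0) q * walkWeight B g else 0 := by
          rw [Finset.sum_comm]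
          refine Finset.sum_congr rfl fun g _ => ?_
          by_cases hp : g (Fin.last m) = p <;> simp [hp, Finset.sum_ite_eq, eq_comm]
      _ = ∑ f : Fin (m + 2) → Fin n,
            if f 0 = q ∧ f (Fin.last (m + 1)) = p then walkWeight B f else 0 := by
          rw [← (Fin.consEquiv (fun _ : Fin (m + 2) => Fin n)).sum_comp]
          simp only [Fintype.sum_prod_type, Fin.consEquiv_apply, Fin.cons_zero]
          symm
          rw [Finset.sum_comm]
          refine Finset.sum_congr rfl fun g _ => ?_
          have h1 : ∀ r : Fin n, Fin.cons (α := fun _ : Fin (m + 2) => Fin n) r g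
              (Fin.last (m + 1)) = g (Fin.last m) := by
            intro r
            rw [← Fin.succ_last, Fin.cons_succ]
          have h2 : ∀ r : Fin n,
              walkWeight B ((Fin.consEquiv fun _ : Fin (m + 2) => Fin n) (r, g))
                = B (g 0) r * walkWeight B g := fun r => key r g
          simp only [h1, h2]
          by_cases hp : g (Fin.last m) = p <;> simp [hp, Finset.sum_ite_eq', eq_comm]

lemma pow_eq_phi {n : ℕ} (E : Finset (Fin n × Fin n)) (B : Matrix (Fin n) (Fin n) ℝ)
    (hB : IsInWeighting E B) (m : ℕ) (q p : Fin n) :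
    (B ^ m) p q = phi B (walks n E m q p) := by
  rw [pow_apply_eq_sum_weight, phi, walks, Finset.sum_filter]
  refine Finset.sum_congr rfl fun f _ => ?_
  by_cases he : ∀ t : Fin m, (f t.castSucc, f t.succ) ∈ E
  · simp [he]
  · push_neg at he
    obtain ⟨t, ht⟩ := he
    have hw : walkWeight B f = 0 :=
      Finset.prod_eq_zero (Finset.mem_univ t) (hB _ _ ht)
    simp [hw, fun h : ∀ t : Fin m, (f t.castSucc, f t.succ) ∈ E => ht (h t)]

lemma no_late_entry {n : ℕ} {E : Finset (Fin n × Fin n)} {j i p : Fin n}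
    (hE : (j, i) ∈ E) {m : ℕ} (hm : (m : ℕ∞) ≤ gdist n E j p) {q : Fin n}
    {f : Fin (m + 1) → Fin n} (hf : f ∈ walks n E m q p) (s : Fin (m + 1))
    (hs : 2 ≤ (s : ℕ)) : f s ≠ i := by
  intro hfs
  rw [walks, Finset.mem_filter] at hf
  obtain ⟨-, hedge, -, hlast⟩ := hf
  set s' : ℕ := (s : ℕ) with hs'
  have hsm : s' ≤ m := Nat.lt_succ_iff.mp s.isLt
  set k : ℕ := m - s' + 1 with hk
  -- build a walk of length k from j to p
  set g : Fin (k + 1) → Fin n := fun t =>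
    if (t : ℕ) = 0 then j else f ⟨s' - 1 + (t : ℕ), by omega⟩ with hg
  have hgw : g ∈ walks n E k j p := by
    rw [walks, Finset.mem_filter]
    refine ⟨Finset.mem_univ _, fun t => ?_, ?_, ?_⟩
    · rcases Nat.eq_zero_or_pos (t : ℕ) with h0 | h0
      · have hc : g t.castSucc = j := by
          simp [hg, Fin.coe_castSucc, h0]
          intro h; exact absurd (Fin.val_eq_zero_iff.mp h0) h
        have hsu : g t.succ = i := by
          have : (t.succ : ℕ) = 1 := by simp [h0]
          have h1 : g t.succ = f ⟨s' - 1 + 1, by omega⟩ := by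
            simp only [hg]
            rw [if_neg (by omega)]
            congr 1
            all_goals exact Fin.ext (by simp [h0])
          rw [h1, ← hfs]
          congr 1
          all_goals exact Fin.ext (by simp; try omega)
        rw [hc, hsu]; exact hE
      · have hb : s' - 1 + (t : ℕ) < m := by omega
        have hc : g t.castSucc = f (Fin.castSucc ⟨s' - 1 + (t : ℕ), hb⟩) := by
          simp [hg, Fin.coe_castSucc]
          intro h; subst h; simp at h0
        have hsu : g t.succ = f (Fin.succ ⟨s' - 1 + (t : ℕ), hb⟩) := by
          have h1 : ((t.succ : Fin (k + 1)) : ℕ) = (t : ℕ) + 1 := by simp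
          simp only [hg, h1]
          rw [if_neg (by omega)]
          congr 1
          all_goals exact Fin.ext (by simp; try omega)
        rw [hc, hsu]
        exact hedge _
    · simp [hg]
    · have : ((Fin.last k : Fin (k + 1)) : ℕ) = k := rfl
      simp only [hg, this]
      rw [if_neg (by omega)]
      rw [← hlast]
      congr 1
      all_goals exact Fin.ext (by simp; try omega)
  have hle : gdist n E j p ≤ (k : ℕ∞) := by
    refine iInf₂_le k ?_
    exact ⟨g, hgw⟩
  have hlt : (k : ℕ∞) < (m : ℕ∞) := by
    rw [Nat.cast_lt]
    omega
  exact absurd ((hm.trans hle).trans_lt hlt) (lt_irrefl _)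

/-- under the failed-link setup, for `1 ≤ m ≤ dist(G; j, p)` the
perturbation of the `m`-th matrix power is concentrated on the walks whose first
edge enters `i`:
`[Ā^m]_{pq} - [A^m]_{pq} = Φ(Ω^m(Ḡ; q, i, p), Ā) - Φ(Ω^m(G; q, i, p), A)`. -/
theorem pow_perturbation_through_head {n : ℕ} (E : Finset (Fin n × Fin n))
    (A Abar : Matrix (Fin n) (Fin n) ℝ)
    (j i p : Fin n) (hE : (j, i) ∈ E)
    (hA : IsInWeighting E A)
    (hAbar : IsInWeighting (E.erase (j, i)) Abar)
    (hij : Abar i j = 0)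
    (hrow : ∀ q r : Fin n, q ≠ i → Abar q r = A q r) :
    ∀ q : Fin n, ∀ m : ℕ, 1 ≤ m → (m : ℕ∞) ≤ gdist n E j p →
      (Abar ^ m) p q - (A ^ m) p q =
        phi Abar (walksThrough n (E.erase (j, i)) m q i p)
          - phi A (walksThrough n E m q i p) := by
  intro q m hm1 hm2
  have hval1 : ((1 : Fin (m + 1)) : ℕ) = 1 := by
    rw [Fin.val_one']
    exact Nat.mod_eq_of_lt (by omega)
  -- every walk in G avoids i from step 2 on; walks avoiding i after step 0
  have hEsub : E.erase (j, i) ⊆ E := Finset.erase_subset _ _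
  have hWsub : walks n (E.erase (j, i)) m q p ⊆ walks n E m q p := by
    intro f hf
    rw [walks, Finset.mem_filter] at hf ⊢
    exact ⟨hf.1, fun t => hEsub (hf.2.1 t), hf.2.2⟩
  -- key : for f a G-walk with f 1 ≠ i, every vertex at step ≥ 1 is not i
  have hkey : ∀ f ∈ walks n E m q p, f 1 ≠ i → ∀ t : Fin m, f t.succ ≠ i := by
    intro f hf h1 t
    rcases Nat.eq_zero_or_pos (t : ℕ) with h0 | h0
    · have : t.succ = 1 := Fin.ext (by rw [Fin.val_succ, h0, hval1])
      rw [this]; exact h1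
    · exact no_late_entry hE hm2 hf t.succ (by simp; omega)
  -- the filtered (non-through) parts agree as sets
  have hsets : (walks n (E.erase (j, i)) m q p).filter (fun f => ¬ f 1 = i)
      = (walks n E m q p).filter (fun f => ¬ f 1 = i) := by
    ext f
    simp only [Finset.mem_filter]
    constructor
    · rintro ⟨hf, h1⟩
      exact ⟨hWsub hf, h1⟩
    · rintro ⟨hf, h1⟩
      refine ⟨?_, h1⟩
      rw [walks, Finset.mem_filter] at hf ⊢
      refine ⟨hf.1, fun t => ?_, hf.2.2⟩
      refine Finset.mem_erase.mpr ⟨?_, hf.2.1 t⟩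
      intro hc
      exact hkey f (by rw [walks, Finset.mem_filter]; exact hf) h1 t
        (congrArg Prod.snd hc)
    -- weights agree on those walks
  have hweights : ∀ f ∈ (walks n E m q p).filter (fun f => ¬ f 1 = i),
      walkWeight Abar f = walkWeight A f := by
    intro f hf
    rw [Finset.mem_filter] at hf
    refine Finset.prod_congr rfl fun t _ => ?_
    exact hrow _ _ (hkey f hf.1 hf.2 t)
  have hphiN : phi Abar ((walks n (E.erase (j, i)) m q p).filter (fun f => ¬ f 1 = i))
      = phi A ((walks n E m q p).filter (fun f => ¬ f 1 = i)) := by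
    rw [hsets, phi, phi]
    exact Finset.sum_congr rfl hweights
  have split : ∀ (B : Matrix (Fin n) (Fin n) ℝ) (X : Finset (Fin (m + 1) → Fin n)),
      phi B X = phi B (X.filter (fun f => f 1 = i)) + phi B (X.filter (fun f => ¬ f 1 = i)) := by
    intro B X
    rw [phi, phi, phi]
    exact (Finset.sum_filter_add_sum_filter_not X _ _).symm
  rw [pow_eq_phi E A hA, pow_eq_phi (E.erase (j, i)) Abar hAbar,
    split Abar, split A, walksThrough, walksThrough, hphiN]
  ring
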